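/- Let S, P : ℝ → ℝ be a solution of the Type II model for t ≥ 0 with S(0) > 0 and P(0) > 0 (so that S(t) > 0 and P(t) > 0 for all t ≥ 0). Then limsup_{t → ∞} S(t) ≤ v_c·K. More precisely, for any t₀ ≥ 0 with S(t₀) < v_c·K one has S(t) ≤ v_c·K + c·exp(−v_c·μ_v·(t − t₀)) for all t ≥ t₀ and some real constant c. -/

import Mathlib

open Filter

section Aux

/-- If a continuous function starts positive and is somewhere nonpositive on `[0,∞)`,
there is a first time `T > 0` where it vanishes, and it is nonnegative on `[0,T]`. -/
lemma firstZero (f : ℝ → ℝ) (hf : Continuous f) (hf0 : 0 < f 0)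
    (hex : ∃ t, 0 ≤ t ∧ f t ≤ 0) :
    ∃ T, 0 < T ∧ f T = 0 ∧ ∀ t, 0 ≤ t → t ≤ T → 0 ≤ f t := by
  set Z : Set ℝ := {t | 0 ≤ t} ∩ {t | f t ≤ 0} with hZdef
  have hcl : IsClosed Z :=
    (isClosed_le continuous_const continuous_id).inter (isClosed_le hf continuous_const)
  have hne : Z.Nonempty := by
    obtain ⟨t, ht0, htf⟩ := hex
    exact ⟨t, ht0, htf⟩
  have hbdd : BddBelow Z := ⟨0, fun t ht => ht.1⟩
  set T := sInf Z with hTdef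
  have hTZ : T ∈ Z := hcl.csInf_mem hne hbdd
  have hT0 : 0 ≤ T := hTZ.1
  have hTpos : 0 < T := by
    rcases lt_or_eq_of_le hT0 with h | h
    · exact h
    · exfalso
      have h0 : f T ≤ 0 := hTZ.2
      rw [← h] at h0
      linarith
  have hpos : ∀ t, 0 ≤ t → t < T → 0 < f t := by
    intro t ht0 htT
    by_contra h
    push_neg at h
    have : t ∈ Z := ⟨ht0, h⟩
    have := csInf_le hbdd this
    linarith
  have hfTnn : 0 ≤ f T := by
    have htends : Filter.Tendsto f (nhdsWithin T (Set.Iio T)) (nhds (f T)) :=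
      hf.continuousAt.tendsto.mono_left nhdsWithin_le_nhds
    refine ge_of_tendsto htends ?_
    have hmem : Set.Ioo (0:ℝ) T ∈ nhdsWithin T (Set.Iio T) :=
      Ioo_mem_nhdsLT_of_mem ⟨hTpos, le_refl T⟩
    filter_upwards [hmem] with t ht
    exact (hpos t ht.1.le ht.2).le
  have hfT : f T = 0 := le_antisymm hTZ.2 hfTnn
  refine ⟨T, hTpos, hfT, fun t ht0 htT => ?_⟩
  rcases lt_or_eq_of_le htT with h | h
  · exact (hpos t ht0 h).le
  · rw [h, hfT]

/-- Grönwall-type positivity: if `f' = f·g` on `[0,∞)` (whenever `f` is nonnegative),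
with `g` continuous on compacts (whenever `f` is nonnegative there), and `f 0 > 0`,
then `f` stays positive. -/
lemma posForever (f g : ℝ → ℝ) (hf : Differentiable ℝ f) (hf0 : 0 < f 0)
    (hg : ∀ T, 0 < T → (∀ t, 0 ≤ t → t ≤ T → 0 ≤ f t) → ContinuousOn g (Set.Icc 0 T))
    (hd : ∀ t, 0 ≤ t → 0 ≤ f t → deriv f t = f t * g t) :
    ∀ t, 0 ≤ t → 0 < f t := by
  by_contra h
  push_neg at h
  obtain ⟨T, hTpos, hfT, hfnn⟩ := firstZero f hf.continuous hf0
    (by obtain ⟨t, ht0, htf⟩ := h; exact ⟨t, ht0, htf⟩)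
  -- bound g on [0,T]
  obtain ⟨C, hC⟩ := (isCompact_Icc (a := (0:ℝ)) (b := T)).exists_bound_of_continuousOn
    (hg T hTpos hfnn)
  -- consider φ t = f t * exp (C t)
  set φ : ℝ → ℝ := fun t => f t * Real.exp (C * t) with hφdef
  have hφderiv : ∀ t, HasDerivAt φ (deriv f t * Real.exp (C * t)
      + f t * (Real.exp (C * t) * C)) t := by
    intro t
    have h1 : HasDerivAt (fun x => Real.exp (C * x)) (Real.exp (C * t) * (C * 1)) t :=
      (((hasDerivAt_id t).const_mul C)).exp
    have h2 := ((hf t).hasDerivAt).mul h1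
    exact h2.congr_deriv (by ring)
  have hmono : MonotoneOn φ (Set.Icc 0 T) := by
    apply monotoneOn_of_deriv_nonneg (convex_Icc 0 T)
    · exact (hf.continuous.mul (by continuity)).continuousOn
    · intro t _
      exact ((hφderiv t).differentiableAt).differentiableWithinAt
    · intro t ht
      rw [interior_Icc] at ht
      rw [(hφderiv t).deriv]
      have hft : 0 ≤ f t := hfnn t ht.1.le ht.2.le
      rw [hd t ht.1.le hft]
      have hgC : -C ≤ g t := by
        have := hC t ⟨ht.1.le, ht.2.le⟩
        have : |g t| ≤ C := this
        linarith [neg_abs_le (g t)]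
      have hE : 0 < Real.exp (C * t) := Real.exp_pos _
      have hkey : 0 ≤ f t * (g t + C) * Real.exp (C * t) :=
        mul_nonneg (mul_nonneg hft (by linarith)) hE.le
      nlinarith [hkey]
  have h0T := hmono (Set.left_mem_Icc.2 hTpos.le) (Set.right_mem_Icc.2 hTpos.le) hTpos.le
  have e0 : φ 0 = f 0 := by simp [hφdef]
  have eT : φ T = 0 := by simp [hφdef, hfT]
  rw [e0, eT] at h0T
  linarith

end Aux

/-- For a solution of the Type II model with positive initial conditions,
`limsup_{t→∞} S(t) ≤ vc·K`; more precisely, for any `t₀ ≥ 0` with `S(t₀) < vc·K`,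
`S(t) ≤ vc·K + c·exp(−vc·μv·(t − t₀))` for all `t ≥ t₀` and some real constant `c`. -/
theorem typeII_S_limsup (μv βv Ep K vc α δ : ℝ)
    (hμ : 0 < μv) (hβ : 0 < βv) (hE : 0 < Ep) (hK : 0 < K) (hv : 0 < vc)
    (hα : 0 < α) (hδ : 0 < δ)
    (S P : ℝ → ℝ) (hS : Differentiable ℝ S) (hP : Differentiable ℝ P)
    (hS' : ∀ t ≥ (0:ℝ),
      deriv S t = vc * μv * S t * (1 - S t / (vc * K)) -
        βv * vc * S t * P t / (1 + βv * vc * Ep * S t))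
    (hP' : ∀ t ≥ (0:ℝ),
      deriv P t = α * βv * vc * S t * P t / (1 + βv * vc * Ep * S t) - δ * P t)
    (hS0 : 0 < S 0) (hP0 : 0 < P 0) :
    limsup S atTop ≤ vc * K ∧
    ∀ t₀ ≥ (0:ℝ), S t₀ < vc * K → ∃ c : ℝ, ∀ t ≥ t₀,
      S t ≤ vc * K + c * Real.exp (-(vc * μv) * (t - t₀)) := by
  have hA : 0 < vc * K := mul_pos hv hK
  -- positivity of S
  have hSpos : ∀ t, 0 ≤ t → 0 < S t := by
    apply posForever S (fun t => vc * μv * (1 - S t / (vc * K))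
        - βv * vc * P t / (1 + βv * vc * Ep * S t)) hS hS0
    · intro T hT hfnn
      apply ContinuousOn.sub
      · exact (continuous_const.mul (continuous_const.sub
          (hS.continuous.div_const _))).continuousOn
      · apply ContinuousOn.div
        · exact (continuous_const.mul hP.continuous).continuousOn
        · exact (continuous_const.add
            (continuous_const.mul hS.continuous)).continuousOn
        · intro t ht
          have hst : 0 ≤ S t := hfnn t ht.1 ht.2
          positivity
    · intro t ht hst
      have hD : (1 + βv * vc * Ep * S t) ≠ 0 := by positivity
      rw [hS' t ht]
      field_simp
  -- positivity of P
  have hPpos : ∀ t, 0 ≤ t → 0 < P t := by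
    apply posForever P (fun t => α * βv * vc * S t / (1 + βv * vc * Ep * S t) - δ) hP hP0
    · intro T hT _
      apply ContinuousOn.sub
      · apply ContinuousOn.div
        · exact (continuous_const.mul hS.continuous).continuousOn
        · exact (continuous_const.add
            (continuous_const.mul hS.continuous)).continuousOn
        · intro t ht
          have hst : 0 < S t := hSpos t ht.1
          positivity
      · exact continuousOn_const
    · intro t ht _
      have hst : 0 < S t := hSpos t ht
      have hD : (1 + βv * vc * Ep * S t) ≠ 0 := by positivity
      rw [hP' t ht]
      field_simp
  -- the key decay estimate
  have key : ∀ t₀, 0 ≤ t₀ → ∀ t, t₀ ≤ t →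
      S t ≤ vc * K + (S t₀ - vc * K) * Real.exp (-(vc * μv) * (t - t₀)) := by
    intro t₀ ht₀ t htt
    set u : ℝ → ℝ := fun s => (S s - vc * K) * Real.exp ((vc * μv) * (s - t₀)) with hudef
    have huderiv : ∀ s, HasDerivAt u (deriv S s * Real.exp ((vc * μv) * (s - t₀))
        + (S s - vc * K) * (Real.exp ((vc * μv) * (s - t₀)) * (vc * μv))) s := by
      intro s
      have h1 : HasDerivAt (fun x => Real.exp ((vc * μv) * (x - t₀)))
          (Real.exp ((vc * μv) * (s - t₀)) * ((vc * μv) * 1)) s :=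
        (((hasDerivAt_id s).sub_const t₀).const_mul (vc * μv)).exp
      have h2 := (((hS s).hasDerivAt).sub_const (vc * K)).mul h1
      rw [hudef]
      exact h2.congr_deriv (by ring)
    have hanti : AntitoneOn u (Set.Ici t₀) := by
      apply antitoneOn_of_deriv_nonpos (convex_Ici t₀)
      · exact ((hS.sub_const _).continuous.mul
          (Real.continuous_exp.comp (continuous_const.mul
            (continuous_id.sub continuous_const)))).continuousOn
      · intro s _
        exact ((huderiv s).differentiableAt).differentiableWithinAt
      · intro s hs
        rw [interior_Ici] at hs
        have hs0 : (0:ℝ) ≤ s := le_trans ht₀ hs.le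
        rw [(huderiv s).deriv, hS' s hs0]
        have hst : 0 < S s := hSpos s hs0
        have hpt : 0 < P s := hPpos s hs0
        have hD : 0 < 1 + βv * vc * Ep * S s := by positivity
        have hE : 0 < Real.exp ((vc * μv) * (s - t₀)) := Real.exp_pos _
        have hide : vc * μv * S s * (1 - S s / (vc * K))
            + (S s - vc * K) * (vc * μv)
            = -((vc * μv) / (vc * K)) * (S s - vc * K)^2 := by
          field_simp
          ring
        have hTnn : 0 ≤ βv * vc * S s * P s / (1 + βv * vc * Ep * S s) := by positivity
        have hsq : 0 ≤ ((vc * μv) / (vc * K)) * (S s - vc * K)^2 := by positivity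
        nlinarith [hE, hTnn, hsq, mul_le_mul_of_nonneg_right
          (le_of_eq hide) hE.le]
    have h1 : u t ≤ u t₀ := hanti (Set.self_mem_Ici) (Set.mem_Ici.2 htt) htt
    have hu0 : u t₀ = S t₀ - vc * K := by
      simp [hudef]
    have hE : 0 < Real.exp ((vc * μv) * (t - t₀)) := Real.exp_pos _
    have h2 : S t - vc * K ≤ (S t₀ - vc * K) / Real.exp ((vc * μv) * (t - t₀)) := by
      rw [le_div_iff₀ hE]
      rw [hu0] at h1
      exact h1
    have h3 : (S t₀ - vc * K) / Real.exp ((vc * μv) * (t - t₀))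
        = (S t₀ - vc * K) * Real.exp (-(vc * μv) * (t - t₀)) := by
      rw [neg_mul, Real.exp_neg, div_eq_mul_inv]
    linarith [h2.trans_eq h3]
  constructor
  · -- limsup part
    set g : ℝ → ℝ := fun t => vc * K + (S 0 - vc * K) * Real.exp (-(vc * μv) * (t - 0))
      with hgdef
    have h1 : ∀ᶠ t in atTop, S t ≤ g t := by
      filter_upwards [eventually_ge_atTop (0:ℝ)] with t ht
      exact key 0 le_rfl t ht
    have h2 : Tendsto g atTop (nhds (vc * K)) := by
      have hlin : Tendsto (fun t : ℝ => t - 0) atTop atTop := by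
        exact (tendsto_id (x := (atTop : Filter ℝ))).congr (fun t => (sub_zero t).symm)
      have hexp : Tendsto (fun t : ℝ => Real.exp (-(vc * μv) * (t - 0))) atTop (nhds 0) :=
        Real.tendsto_exp_atBot.comp
          (hlin.const_mul_atTop_of_neg (by simp; positivity))
      have := (tendsto_const_nhds (x := vc * K) (f := (atTop : Filter ℝ))).add
        ((tendsto_const_nhds (x := S 0 - vc * K)).mul hexp)
      rw [hgdef]
      simpa using this
    have hb : IsBoundedUnder (· ≤ ·) atTop g := h2.isBoundedUnder_le
    have hcb : IsCoboundedUnder (· ≤ ·) atTop S := by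
      have hlb : IsBoundedUnder (· ≥ ·) atTop S := by
        refine ⟨0, ?_⟩
        rw [Filter.eventually_map]
        filter_upwards [eventually_ge_atTop (0:ℝ)] with t ht
        exact (hSpos t ht).le
      exact hlb.isCoboundedUnder_le
    calc limsup S atTop ≤ limsup g atTop := limsup_le_limsup h1 hcb hb
      _ = vc * K := h2.limsup_eq
  · intro t₀ ht₀ _
    exact ⟨S t₀ - vc * K, fun t ht => key t₀ ht₀ t ht⟩
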